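/- arXiv:1701.07016 — 2 statements merged into one kernel-verified Lean document; each statement's English description precedes it below -/
import Mathlib

section
/- For all positive integers $n$ and $r$, the polynomial $[n]^2 \binom{2n}{n}_q$ divides $\sum_{k=1}^{n} [2k][k]^{2r} q^{(r+1)(n-k)} \binom{2n}{n+k}_q$ in the polynomial ring $\mathbb{Z}[q]$. -/
open Polynomial Finset

/-- The `q`-integer `[n] = 1 + q + ⋯ + q^(n-1)` as a polynomial in `ℤ[q]`. -/
noncomputable def qint (n : ℕ) : Polynomial ℤ := ∑ i ∈ Finset.range n, Polynomial.X ^ i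

/-- The Gaussian binomial coefficient `[n choose k]_q` in `ℤ[q]`, via the `q`-Pascal rule. -/
noncomputable def qbinom : ℕ → ℕ → Polynomial ℤ
  | _, 0 => 1
  | 0, _ + 1 => 0
  | n + 1, k + 1 => qbinom n k + Polynomial.X ^ (k + 1) * qbinom n (k + 1)

lemma qint_zero : qint 0 = 0 := by simp [qint]

lemma qint_one : qint 1 = 1 := by simp [qint]

lemma qint_add (a b : ℕ) : qint (a + b) = qint a + X ^ a * qint b := by
  simp [qint, Finset.sum_range_add, Finset.mul_sum, pow_add]

lemma qint_mul_X_sub_one (m : ℕ) : (X - 1) * qint m = X ^ m - 1 := by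
  induction m with
  | zero => simp [qint_zero]
  | succ k ih =>
    rw [show k + 1 = k + 1 from rfl, qint_add, qint_one, mul_add, ih]
    ring

lemma qint_eval_one (m : ℕ) : (qint m).eval 1 = m := by
  simp [qint]

lemma qint_ne_zero {m : ℕ} (h : m ≠ 0) : qint m ≠ 0 := by
  intro hc
  have := qint_eval_one m
  rw [hc] at this
  simp at this
  omega

noncomputable def qfact : ℕ → Polynomial ℤ
  | 0 => 1
  | m + 1 => qfact m * qint (m + 1)

lemma qfact_ne_zero (m : ℕ) : qfact m ≠ 0 := by
  induction m with
  | zero => simp [qfact]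
  | succ k ih => exact mul_ne_zero ih (qint_ne_zero k.succ_ne_zero)

lemma qbinom_eq_zero_of_lt : ∀ {m j : ℕ}, m < j → qbinom m j = 0
  | 0, j + 1, _ => rfl
  | m + 1, j + 1, h => by
    rw [qbinom]
    rw [qbinom_eq_zero_of_lt (by omega), qbinom_eq_zero_of_lt (by omega)]
    ring

lemma qbinom_mul_qfact : ∀ m j : ℕ, j ≤ m →
    qbinom m j * (qfact j * qfact (m - j)) = qfact m
  | m, 0, _ => by simp [qbinom, qfact]
  | 0, j + 1, h => by omega
  | m + 1, j + 1, h => by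
    rw [qbinom]
    rcases Nat.lt_or_ge j m with hj | hj
    · have h1 := qbinom_mul_qfact m j (by omega)
      have h2 := qbinom_mul_qfact m (j + 1) (by omega)
      have e1 : m - j = (m - (j + 1)) + 1 := by omega
      have e2 : m + 1 - (j + 1) = m - j := by omega
      rw [e2, add_mul, e1]
      rw [show qfact ((m - (j+1)) + 1) = qfact (m - (j+1)) * qint (m - (j+1) + 1) from rfl]
      rw [show qfact (j + 1) = qfact j * qint (j + 1) from rfl]
      have key : qint (j + 1) + X ^ (j + 1) * qint (m - (j + 1) + 1) = qint (m + 1) := by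
        rw [← qint_add]; congr 1; omega
      calc qbinom m j * (qfact j * qint (j + 1) * (qfact (m - (j+1)) * qint (m - (j+1) + 1))) +
            X ^ (j + 1) * qbinom m (j + 1) * (qfact j * qint (j + 1) * (qfact (m - (j+1)) * qint (m - (j+1) + 1)))
          = (qbinom m j * (qfact j * qfact (m - j))) * qint (j + 1) +
            X ^ (j + 1) * (qbinom m (j+1) * (qfact (j+1) * qfact (m - (j+1)))) * qint (m - (j+1) + 1) := by
            rw [e1, show qfact ((m - (j+1)) + 1) = qfact (m - (j+1)) * qint (m - (j+1) + 1) from rfl,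
              show qfact (j + 1) = qfact j * qint (j + 1) from rfl]
            ring
        _ = qfact m * (qint (j + 1) + X ^ (j + 1) * qint (m - (j + 1) + 1)) := by
            rw [h1, h2]; ring
        _ = qfact (m + 1) := by rw [key]; rfl
    · have hjm : j = m := by omega
      subst hjm
      rw [qbinom_eq_zero_of_lt (Nat.lt_succ_self j), mul_zero, add_zero,
        Nat.sub_self]
      have h1 := qbinom_mul_qfact j j le_rfl
      rw [Nat.sub_self] at h1
      rw [show qfact (j + 1) = qfact j * qint (j + 1) from rfl]
      rw [show (qfact 0 : Polynomial ℤ) = 1 from rfl] at h1 ⊢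
      linear_combination (qint (j + 1)) * h1

-- absorption identity
lemma qbinom_absorb (a b : ℕ) :
    qint (a + 1) * qbinom (a + b + 1) (a + 1) = qint (b + 1) * qbinom (a + b + 1) a := by
  have hne : qfact a * qfact b ≠ 0 := mul_ne_zero (qfact_ne_zero a) (qfact_ne_zero b)
  apply mul_right_cancel₀ hne
  have h1 := qbinom_mul_qfact (a + b + 1) (a + 1) (by omega)
  have h2 := qbinom_mul_qfact (a + b + 1) a (by omega)
  rw [show a + b + 1 - (a + 1) = b from by omega] at h1
  rw [show a + b + 1 - a = b + 1 from by omega] at h2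
  rw [show qfact (a + 1) = qfact a * qint (a + 1) from rfl] at h1
  rw [show qfact (b + 1) = qfact b * qint (b + 1) from rfl] at h2
  calc qint (a+1) * qbinom (a+b+1) (a+1) * (qfact a * qfact b)
      = qbinom (a+b+1) (a+1) * (qfact a * qint (a+1) * qfact b) := by ring
    _ = qfact (a+b+1) := h1
    _ = qbinom (a+b+1) a * (qfact a * (qfact b * qint (b+1))) := h2.symm
    _ = qint (b+1) * qbinom (a+b+1) a * (qfact a * qfact b) := by ring

-- the double-absorption / reduction identity
lemma qbinom_reduce (a b : ℕ) :
    qint (a + 1) * qint (b + 1) * qbinom (a + b + 2) (a + 1) =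
      qint (a + b + 2) * qint (a + b + 1) * qbinom (a + b) a := by
  have hne : qfact a * qfact b ≠ 0 := mul_ne_zero (qfact_ne_zero a) (qfact_ne_zero b)
  apply mul_right_cancel₀ hne
  have h1 := qbinom_mul_qfact (a + b + 2) (a + 1) (by omega)
  have h2 := qbinom_mul_qfact (a + b) a (by omega)
  rw [show a + b + 2 - (a + 1) = b + 1 from by omega] at h1
  rw [show a + b - a = b from by omega] at h2
  rw [show qfact (a + 1) = qfact a * qint (a + 1) from rfl,
    show qfact (b + 1) = qfact b * qint (b + 1) from rfl] at h1
  calc qint (a+1) * qint (b+1) * qbinom (a+b+2) (a+1) * (qfact a * qfact b)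
      = qbinom (a+b+2) (a+1) * (qfact a * qint (a+1) * (qfact b * qint (b+1))) := by ring
    _ = qfact (a+b+2) := h1
    _ = qfact (a+b) * qint (a+b+1) * qint (a+b+2) := by
        rw [show qfact (a+b+2) = qfact (a+b+1) * qint (a+b+2) from rfl,
          show qfact (a+b+1) = qfact (a+b) * qint (a+b+1) from rfl]
    _ = (qbinom (a+b) a * (qfact a * qfact b)) * qint (a+b+1) * qint (a+b+2) := by rw [h2]
    _ = qint (a+b+2) * qint (a+b+1) * qbinom (a+b) a * (qfact a * qfact b) := by ring

-- key q-integer identity:  [k+d]^2 = X^d [k]^2 + [2k+d][d]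
lemma qint_sq_decomp (k d : ℕ) :
    (qint (k + d)) ^ 2 = X ^ d * (qint k) ^ 2 + qint (2 * k + d) * qint d := by
  have e1 := qint_mul_X_sub_one k
  have e2 := qint_mul_X_sub_one d
  have d1 : qint (k + d) = qint d + X ^ d * qint k := by
    rw [show k + d = d + k from by omega, qint_add]
  have d2 : qint (2 * k + d) = qint d + X ^ d * qint k + X ^ (d + k) * qint k := by
    rw [show 2 * k + d = (d + k) + k from by omega, qint_add, qint_add]
  rw [d1, d2, pow_add]
  linear_combination (X ^ d * qint k * qint d) * e1 - (X ^ d * qint k * qint k) * e2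

/-- The sum in the theorem. -/
noncomputable def qS (r n : ℕ) : Polynomial ℤ :=
  ∑ k ∈ Finset.Icc 1 n,
    qint (2 * k) * (qint k) ^ (2 * r) * X ^ ((r + 1) * (n - k)) * qbinom (2 * n) (n + k)

lemma qS_zero_right (r : ℕ) : qS r 0 = 0 := by simp [qS]

lemma qS_zero (n : ℕ) : qS 0 n = qint n * qbinom (2 * n) n := by
  have hstep : ∀ i ∈ Finset.range n,
      qint (2 * (1 + i)) * (qint (1 + i)) ^ (2 * 0) * X ^ ((0 + 1) * (n - (1 + i))) *
          qbinom (2 * n) (n + (1 + i)) =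
        qint (n - i) * qbinom (2 * n) (n + i) -
          qint (n - (i + 1)) * qbinom (2 * n) (n + (i + 1)) := by
    intro i hi
    rw [Finset.mem_range] at hi
    have habs := qbinom_absorb (n + i) (n - i - 1)
    rw [show n + i + (n - i - 1) + 1 = 2 * n from by omega,
        show n - i - 1 + 1 = n - i from by omega] at habs
    have hsplit : qint (n + i + 1) = qint (n - (i + 1)) + X ^ (n - (i + 1)) * qint (2 * (1 + i)) := by
      rw [← qint_add]
      congr 1
      omega
    rw [show n + (1 + i) = n + i + 1 from by omega]
    rw [show qint (n - i) * qbinom (2 * n) (n + i) = qint (n + i + 1) * qbinom (2 * n) (n + i + 1)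
        from habs.symm]
    rw [hsplit, show n + (i + 1) = n + i + 1 from by omega,
      show (0 + 1) * (n - (1 + i)) = n - (i + 1) from by omega]
    ring
  have := Finset.sum_congr rfl hstep
  have htel := Finset.sum_range_sub' (fun i => qint (n - i) * qbinom (2 * n) (n + i)) n
  calc qS 0 n = ∑ i ∈ Finset.range n,
        qint (2 * (1 + i)) * (qint (1 + i)) ^ (2 * 0) * X ^ ((0 + 1) * (n - (1 + i))) *
          qbinom (2 * n) (n + (1 + i)) := by
        rw [qS, ← Finset.Ico_add_one_right_eq_Icc, Finset.sum_Ico_eq_sum_range]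
        simp
    _ = ∑ i ∈ Finset.range n, (qint (n - i) * qbinom (2 * n) (n + i) -
          qint (n - (i + 1)) * qbinom (2 * n) (n + (i + 1))) := this
    _ = qint (n - 0) * qbinom (2 * n) (n + 0) - qint (n - n) * qbinom (2 * n) (n + n) := htel
    _ = qint n * qbinom (2 * n) n := by
        rw [Nat.sub_self, qint_zero]
        simp

/-- The central reduction identity, valid for `1 ≤ k ≤ n`. -/
lemma reduce_term {n k : ℕ} (hn : 1 ≤ n) (hk1 : 1 ≤ k) (hk2 : k ≤ n) :
    qint (n + k) * qint (n - k) * qbinom (2 * n) (n + k) =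
      qint (2 * n) * qint (2 * n - 1) * qbinom (2 * n - 2) (n - 1 + k) := by
  rcases eq_or_lt_of_le hk2 with he | hlt
  · subst he
    rw [Nat.sub_self, qint_zero,
      qbinom_eq_zero_of_lt (show 2 * k - 2 < k - 1 + k from by omega)]
    ring
  · have h := qbinom_reduce (n + k - 1) (n - k - 1)
    rw [show n + k - 1 + 1 = n + k from by omega,
      show n - k - 1 + 1 = n - k from by omega,
      show n + k - 1 + (n - k - 1) + 2 = 2 * n from by omega,
      show n + k - 1 + (n - k - 1) + 1 = 2 * n - 1 from by omega,
      show n + k - 1 + (n - k - 1) = 2 * n - 2 from by omega,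
      show n + k - 1 = n - 1 + k from by omega] at h
    exact h

/-- The recurrence `S(r+1,n) = [n]^2 S(r,n) - q^(r+1) [2n][2n-1] S(r,n-1)`. -/
lemma qS_rec (r n : ℕ) (hn : 1 ≤ n) :
    qS (r + 1) n = (qint n) ^ 2 * qS r n -
      X ^ (r + 1) * (qint (2 * n) * qint (2 * n - 1) * qS r (n - 1)) := by
  have step1 : ∀ k ∈ Finset.Icc 1 n,
      qint (2 * k) * (qint k) ^ (2 * (r + 1)) * X ^ ((r + 1 + 1) * (n - k)) *
          qbinom (2 * n) (n + k) =
        (qint n) ^ 2 * (qint (2 * k) * (qint k) ^ (2 * r) * X ^ ((r + 1) * (n - k)) *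
            qbinom (2 * n) (n + k)) -
          qint (2 * k) * (qint k) ^ (2 * r) * X ^ ((r + 1) * (n - k)) *
            (qint (2 * n) * qint (2 * n - 1) * qbinom (2 * n - 2) (n - 1 + k)) := by
    intro k hk
    rw [Finset.mem_Icc] at hk
    have hd : (qint n) ^ 2 = X ^ (n - k) * (qint k) ^ 2 + qint (n + k) * qint (n - k) := by
      have h := qint_sq_decomp k (n - k)
      rw [show k + (n - k) = n from by omega, show 2 * k + (n - k) = n + k from by omega] at h
      exact h
    have hrd := reduce_term hn hk.1 hk.2
    rw [show 2 * (r + 1) = 2 * r + 2 from by ring, pow_add,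
      show (r + 1 + 1) * (n - k) = (r + 1) * (n - k) + (n - k) from by ring, pow_add]
    linear_combination
      (-(qint (2 * k) * (qint k) ^ (2 * r) * X ^ ((r + 1) * (n - k)) *
        qbinom (2 * n) (n + k))) * hd -
      (qint (2 * k) * (qint k) ^ (2 * r) * X ^ ((r + 1) * (n - k))) * hrd
  have step2 :
      ∑ k ∈ Finset.Icc 1 n, qint (2 * k) * (qint k) ^ (2 * r) * X ^ ((r + 1) * (n - k)) *
          (qint (2 * n) * qint (2 * n - 1) * qbinom (2 * n - 2) (n - 1 + k)) =
        X ^ (r + 1) * (qint (2 * n) * qint (2 * n - 1) * qS r (n - 1)) := by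
    have hsplit : Finset.Icc 1 n = Finset.Icc 1 (n - 1 + 1) := by rw [Nat.sub_add_cancel hn]
    rw [hsplit, Finset.sum_Icc_succ_top (by omega)]
    rw [show n - 1 + 1 = n from by omega,
      qbinom_eq_zero_of_lt (show 2 * n - 2 < n - 1 + n from by omega)]
    rw [qS, Finset.mul_sum, Finset.mul_sum]
    rw [show ∀ z : Polynomial ℤ, z * (qint (2*n) * qint (2*n-1) * 0) = 0 from by intro z; ring]
    rw [add_zero]
    apply Finset.sum_congr rfl
    intro k hk
    rw [Finset.mem_Icc] at hk
    have h1 : (r + 1) * (n - k) = (r + 1) + (r + 1) * (n - 1 - k) := by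
      have : n - k = (n - 1 - k) + 1 := by omega
      rw [this]; ring
    rw [h1, pow_add, show 2 * (n - 1) = 2 * n - 2 from by omega]
    ring
  calc qS (r + 1) n
      = ∑ k ∈ Finset.Icc 1 n,
        ((qint n) ^ 2 * (qint (2 * k) * (qint k) ^ (2 * r) * X ^ ((r + 1) * (n - k)) *
            qbinom (2 * n) (n + k)) -
          qint (2 * k) * (qint k) ^ (2 * r) * X ^ ((r + 1) * (n - k)) *
            (qint (2 * n) * qint (2 * n - 1) * qbinom (2 * n - 2) (n - 1 + k))) := by
        rw [qS]; exact Finset.sum_congr rfl step1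
    _ = (qint n) ^ 2 * qS r n -
        X ^ (r + 1) * (qint (2 * n) * qint (2 * n - 1) * qS r (n - 1)) := by
        rw [Finset.sum_sub_distrib, ← Finset.mul_sum, ← qS, step2]

lemma key0 {n : ℕ} (hn : 1 ≤ n) :
    qint (2 * n) * qint (2 * n - 1) * qbinom (2 * n - 2) (n - 1) =
      qint n * qint n * qbinom (2 * n) n := by
  have h := qbinom_reduce (n - 1) (n - 1)
  rw [show n - 1 + 1 = n from by omega,
    show n - 1 + (n - 1) + 2 = 2 * n from by omega,
    show n - 1 + (n - 1) + 1 = 2 * n - 1 from by omega,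
    show n - 1 + (n - 1) = 2 * n - 2 from by omega] at h
  exact h.symm

lemma main_dvd : ∀ r : ℕ, 1 ≤ r → ∀ n : ℕ,
    (qint n) ^ 2 * qbinom (2 * n) n ∣ qS r n := by
  intro r hr
  induction r, hr using Nat.le_induction with
  | base =>
    intro n
    rcases Nat.eq_zero_or_pos n with h0 | hn
    · subst h0; rw [qS_zero_right]; exact dvd_zero _
    · have hrec := qS_rec 0 n hn
      rw [qS_zero, qS_zero, show 2 * (n - 1) = 2 * n - 2 from by omega] at hrec
      have h1 : qint n = 1 + X * qint (n - 1) := by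
        have h := qint_add 1 (n - 1)
        rw [show 1 + (n - 1) = n from by omega, qint_one, pow_one] at h
        exact h
      refine ⟨1, ?_⟩
      rw [show (0 : ℕ) + 1 = 1 from rfl] at hrec
      rw [hrec]
      have hk := key0 hn
      linear_combination (-(X * qint (n - 1))) * hk +
        ((qint n) * qbinom (2 * n) n) * (qint n) * h1
  | succ r hr IH =>
    intro n
    rcases Nat.eq_zero_or_pos n with h0 | hn
    · subst h0; rw [qS_zero_right]; exact dvd_zero _
    · rw [qS_rec r n hn]
      apply dvd_sub
      · exact Dvd.dvd.mul_left (IH n) _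
      · obtain ⟨g, hg⟩ := IH (n - 1)
        refine ⟨X ^ (r + 1) * (qint (n - 1)) ^ 2 * g, ?_⟩
        rw [hg, show 2 * (n - 1) = 2 * n - 2 from by omega]
        have hk := key0 hn
        linear_combination (X ^ (r + 1) * (qint (n - 1)) ^ 2 * g) * hk

theorem stmt_4 (n r : ℕ) (hn : 0 < n) (hr : 0 < r) :
    (qint n) ^ 2 * qbinom (2 * n) n ∣
      ∑ k ∈ Finset.Icc 1 n,
        qint (2 * k) * (qint k) ^ (2 * r) * Polynomial.X ^ ((r + 1) * (n - k)) *
          qbinom (2 * n) (n + k) := by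
  exact main_dvd r hr n
end

section
/- For positive integers $n_1, n_2$ and $1 \leq k \leq \min(n_1,n_2)$, there holds $\binom{n_1+n_2}{n_1+k}_q \binom{n_1+n_2}{n_2+k}_q = \sum_{s=0}^{n_1-k} \frac{q^{s^2+2ks} (q;q)_{n_1+n_2}}{(q;q)_s (q;q)_{s+2k} (q;q)_{n_1-k-s} (q;q)_{n_2-k-s}}$, where terms with $n_2 - k - s < 0$ are interpreted as $0$. -/
open Polynomial Finset

/-- The `q`-factorial `(q;q)_n = (1-q)(1-q²)⋯(1-qⁿ)` in `ℤ[q]`. -/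
noncomputable def qfac (n : ℕ) : Polynomial ℤ :=
  ∏ i ∈ Finset.range n, (1 - Polynomial.X ^ (i + 1))

lemma qbinom_zero (n : ℕ) : qbinom n 0 = 1 := by cases n <;> rfl

lemma qbinom_succ_succ (n k : ℕ) :
    qbinom (n+1) (k+1) = qbinom n k + X^(k+1) * qbinom n (k+1) := rfl

lemma qbinom_of_lt : ∀ n k : ℕ, n < k → qbinom n k = 0 := by
  intro n
  induction n with
  | zero =>
    intro k hk
    obtain ⟨i, rfl⟩ : ∃ i, k = i + 1 := ⟨k - 1, by omega⟩
    rfl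
  | succ n ih =>
    intro k hk
    obtain ⟨i, rfl⟩ : ∃ i, k = i + 1 := ⟨k - 1, by omega⟩
    rw [qbinom_succ_succ, ih i (by omega), ih (i+1) (by omega)]
    ring

lemma qbinom_self : ∀ n : ℕ, qbinom n n = 1
  | 0 => rfl
  | n+1 => by
      rw [qbinom_succ_succ, qbinom_self n, qbinom_of_lt n (n+1) (by omega)]; ring

lemma qfac_succ (n : ℕ) : qfac (n+1) = qfac n * (1 - X^(n+1)) :=
  Finset.prod_range_succ _ _

lemma qbinom_mul_qfac : ∀ n k : ℕ, k ≤ n → qbinom n k * (qfac k * qfac (n-k)) = qfac n := by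
  intro n
  induction n with
  | zero =>
    intro k hk
    obtain rfl : k = 0 := by omega
    simp [qbinom_zero, qfac]
  | succ n ih =>
    intro k hk
    match k with
    | 0 => simp [qbinom_zero, qfac]
    | k+1 =>
      rcases eq_or_lt_of_le hk with h | h
      · obtain rfl : k = n := by omega
        rw [qbinom_self]
        simp [qfac]
      · have hk' : k + 1 ≤ n := by omega
        obtain ⟨d, rfl⟩ : ∃ d, n = k + 1 + d := ⟨n - (k+1), by omega⟩
        have h1 := ih k (by omega)
        have h2 := ih (k+1) (by omega)
        rw [show k + 1 + d - k = d + 1 by omega] at h1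
        rw [show k + 1 + d - (k+1) = d by omega] at h2
        rw [show k + 1 + d + 1 - (k + 1) = d + 1 by omega]
        rw [qbinom_succ_succ, qfac_succ (k+1+d), qfac_succ d, qfac_succ k]
        rw [qfac_succ d] at h1
        rw [qfac_succ k] at h2
        linear_combination (1 - (X:Polynomial ℤ)^(k+1)) * h1 +
          (X:Polynomial ℤ)^(k+1) * (1 - (X:Polynomial ℤ)^(d+1)) * h2

/-- The `q`-Vandermonde identity. -/
lemma qvdm (n : ℕ) : ∀ m r : ℕ, qbinom (m + n) r
    = ∑ j ∈ Finset.range (r+1), (X:Polynomial ℤ)^((m-j)*(r-j)) * (qbinom m j * qbinom n (r-j)) := by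
  intro m
  induction m with
  | zero =>
    intro r
    rw [Finset.sum_eq_single 0]
    · simp [qbinom_zero]
    · intro j hj hj0
      obtain ⟨i, rfl⟩ : ∃ i, j = i + 1 := ⟨j - 1, by omega⟩
      rw [qbinom_of_lt 0 (i+1) (by omega)]
      ring
    · intro h
      exact absurd (Finset.mem_range.mpr (by omega)) h
  | succ m ih =>
    intro r
    cases r with
    | zero => simp [qbinom_zero]
    | succ t =>
      have pas : qbinom (m + 1 + n) (t+1) = qbinom (m+n) t + X^(t+1) * qbinom (m+n) (t+1) := by
        rw [show m + 1 + n = (m + n) + 1 by omega, qbinom_succ_succ]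
      rw [pas, ih t, ih (t+1),
        Finset.sum_range_succ' (fun j => (X:Polynomial ℤ)^((m+1-j)*(t+1-j)) * (qbinom (m+1) j * qbinom n (t+1-j))) (t+1),
        Finset.sum_range_succ' (fun j => (X:Polynomial ℤ)^((m-j)*(t+1-j)) * (qbinom m j * qbinom n (t+1-j))) (t+1)]
      simp only [Nat.add_sub_add_right, Nat.sub_zero, qbinom_zero, one_mul, mul_one]
      have hterm : ∀ i ∈ Finset.range (t+1),
          (X:Polynomial ℤ)^((m-i)*(t-i)) * (qbinom (m+1) (i+1) * qbinom n (t-i))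
          = (X:Polynomial ℤ)^((m-i)*(t-i)) * (qbinom m i * qbinom n (t-i))
            + X^(t+1) * (X^((m-(i+1))*(t-i)) * (qbinom m (i+1) * qbinom n (t-i))) := by
        intro i hi
        rw [Finset.mem_range] at hi
        rw [qbinom_succ_succ]
        rcases le_or_gt (i+1) m with h | h
        · have he : (m-i)*(t-i) + (i+1) = (t+1) + (m-(i+1))*(t-i) := by
            rw [show m - i = (m - (i+1)) + 1 by omega, add_mul, one_mul]
            generalize (m - (i+1)) * (t - i) = c
            omega
          calc (X:Polynomial ℤ)^((m-i)*(t-i)) * ((qbinom m i + X^(i+1) * qbinom m (i+1)) * qbinom n (t-i))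
              = X^((m-i)*(t-i)) * (qbinom m i * qbinom n (t-i))
                + X^((m-i)*(t-i) + (i+1)) * (qbinom m (i+1) * qbinom n (t-i)) := by
                rw [pow_add]; ring
            _ = _ := by rw [he, pow_add]; ring
        · rw [qbinom_of_lt m (i+1) h]
          ring
      rw [Finset.sum_congr rfl hterm, Finset.sum_add_distrib, ← Finset.mul_sum]
      rw [show (m+1)*(t+1) = (t+1) + m*(t+1) by ring, pow_add]
      ring

lemma qfac_aeval_ne_zero (n : ℕ) :
    (Polynomial.aeval (RatFunc.X : RatFunc ℚ)) (qfac n) ≠ 0 := by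
  unfold qfac
  rw [map_prod]
  refine Finset.prod_ne_zero_iff.mpr fun i _ => ?_
  rw [map_sub, map_one, map_pow, aeval_X]
  have h1 : (1 : RatFunc ℚ) - RatFunc.X ^ (i+1)
      = algebraMap (Polynomial ℚ) (RatFunc ℚ) (1 - X^(i+1)) := by
    simp [map_sub, map_pow, RatFunc.algebraMap_X]
  rw [h1]
  apply RatFunc.algebraMap_ne_zero
  intro h
  have := congrArg (Polynomial.eval 0) h
  simp at this

theorem stmt_8 (n₁ n₂ k : ℕ) (hn₁ : 0 < n₁) (hn₂ : 0 < n₂) (hk1 : 1 ≤ k)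
    (hk₁ : k ≤ n₁) (hk₂ : k ≤ n₂) :
    Polynomial.aeval (RatFunc.X : RatFunc ℚ) (qbinom (n₁ + n₂) (n₁ + k)) *
        Polynomial.aeval (RatFunc.X : RatFunc ℚ) (qbinom (n₁ + n₂) (n₂ + k))
      = ∑ s ∈ Finset.range (n₁ - k + 1),
          if s ≤ n₂ - k then
            (RatFunc.X : RatFunc ℚ) ^ (s ^ 2 + 2 * k * s) *
                Polynomial.aeval (RatFunc.X : RatFunc ℚ) (qfac (n₁ + n₂)) /
              (Polynomial.aeval (RatFunc.X : RatFunc ℚ) (qfac s) *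
                Polynomial.aeval (RatFunc.X : RatFunc ℚ) (qfac (s + 2 * k)) *
                Polynomial.aeval (RatFunc.X : RatFunc ℚ) (qfac (n₁ - k - s)) *
                Polynomial.aeval (RatFunc.X : RatFunc ℚ) (qfac (n₂ - k - s)))
          else 0 := by
  have hq := qfac_aeval_ne_zero
  have key : ∀ n m : ℕ, m ≤ n →
      (Polynomial.aeval (RatFunc.X : RatFunc ℚ)) (qbinom n m)
      = (Polynomial.aeval (RatFunc.X : RatFunc ℚ)) (qfac n) /
        ((Polynomial.aeval (RatFunc.X : RatFunc ℚ)) (qfac m) *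
         (Polynomial.aeval (RatFunc.X : RatFunc ℚ)) (qfac (n-m))) := by
    intro n m h
    rw [eq_div_iff (mul_ne_zero (hq m) (hq (n-m)))]
    rw [← map_mul, ← map_mul, qbinom_mul_qfac n m h]
  obtain ⟨a, rfl⟩ : ∃ a, n₁ = a + k := ⟨n₁ - k, by omega⟩
  obtain ⟨b, rfl⟩ : ∃ b, n₂ = b + k := ⟨n₂ - k, by omega⟩
  simp only [Nat.add_sub_cancel]
  rw [show a+k+(b+k) = a+2*k+b by ring, show a+k+k = a+2*k by ring,
      show b+k+k = b+2*k by ring]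
  -- q-Vandermonde instance, reflected
  have vd := qvdm b (a+2*k) a
  rw [← Finset.sum_range_reflect
      (fun j => (X:Polynomial ℤ)^((a+2*k-j)*(a-j)) * (qbinom (a+2*k) j * qbinom b (a-j))) (a+1)] at vd
  have vd' := congrArg (Polynomial.aeval (RatFunc.X : RatFunc ℚ)) vd
  simp only [map_sum, map_mul, map_pow, aeval_X] at vd'
  have vd'' : (Polynomial.aeval (RatFunc.X : RatFunc ℚ)) (qbinom (a+2*k+b) a)
      = ∑ s ∈ Finset.range (a+1), (RatFunc.X : RatFunc ℚ)^((2*k+s)*s) *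
          ((Polynomial.aeval (RatFunc.X : RatFunc ℚ)) (qbinom (a+2*k) (a-s)) *
           (Polynomial.aeval (RatFunc.X : RatFunc ℚ)) (qbinom b s)) := by
    rw [vd']
    refine Finset.sum_congr rfl fun s hs => ?_
    rw [Finset.mem_range] at hs
    rw [show a + 1 - 1 - s = a - s by omega, show a + 2*k - (a-s) = 2*k+s by omega,
        show a - (a - s) = s by omega]
  have h2 : (Polynomial.aeval (RatFunc.X : RatFunc ℚ)) (qfac (a+2*k+b)) /
        ((Polynomial.aeval (RatFunc.X : RatFunc ℚ)) (qfac (b+2*k)) *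
         (Polynomial.aeval (RatFunc.X : RatFunc ℚ)) (qfac a))
      = (Polynomial.aeval (RatFunc.X : RatFunc ℚ)) (qbinom (a+2*k+b) a) := by
    rw [key (a+2*k+b) a (by omega), show a+2*k+b-a = b+2*k by omega]
    ring
  rw [key (a+2*k+b) (a+2*k) (by omega), key (a+2*k+b) (b+2*k) (by omega),
      show a+2*k+b - (a+2*k) = b by omega, show a+2*k+b - (b+2*k) = a by omega,
      h2, vd'', Finset.mul_sum]
  refine Finset.sum_congr rfl fun s hs => ?_
  rw [Finset.mem_range] at hs
  by_cases hsb : s ≤ b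
  · rw [if_pos hsb, key (a+2*k) (a-s) (by omega), key b s (by omega),
        show a+2*k - (a-s) = s+2*k by omega, show (2*k+s)*s = s^2+2*k*s by ring]
    field_simp [hq]
  · rw [if_neg hsb, qbinom_of_lt b s (by omega), map_zero]
    ring
end
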